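/- Let u : ℝᵐ → ℝ be convex with u(z) ≥ u(x) + y·(z - x) for all z whenever (x,y) ∈ S, where S is the support of a coupling γ of probability measures μ and ν on ℝᵐ with finite second moments. Then γ maximizes ∫ x·y dγ'(x,y) over all couplings γ' of μ and ν. -/

import Mathlib

open MeasureTheory Set
open scoped RealInnerProductSpace

/-- If a coupling `γ` of `(μ, ν)` (probability measures on `ℝᵐ` with finite
second moments) is concentrated on a set `S` contained in the subdifferential
of a convex function `u`, then `γ` maximizes `∫ x·y dγ'` over all couplings
`γ'` of `(μ, ν)`. -/
theorem optimality_of_subdifferential_coupling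
    (m : ℕ) (u : EuclideanSpace ℝ (Fin m) → ℝ)
    (hu : ConvexOn ℝ Set.univ u)
    (μ ν : Measure (EuclideanSpace ℝ (Fin m)))
    [IsProbabilityMeasure μ] [IsProbabilityMeasure ν]
    (hμ2 : MemLp (fun x => x) 2 μ) (hν2 : MemLp (fun y => y) 2 ν)
    (γ : Measure (EuclideanSpace ℝ (Fin m) × EuclideanSpace ℝ (Fin m)))
    (hγ1 : γ.map Prod.fst = μ) (hγ2 : γ.map Prod.snd = ν)
    (S : Set (EuclideanSpace ℝ (Fin m) × EuclideanSpace ℝ (Fin m)))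
    (hconc : γ Sᶜ = 0)
    (hsub : ∀ p ∈ S, ∀ z : EuclideanSpace ℝ (Fin m),
      u p.1 + ⟪p.2, z - p.1⟫ ≤ u z) :
    ∀ γ' : Measure (EuclideanSpace ℝ (Fin m) × EuclideanSpace ℝ (Fin m)),
      γ'.map Prod.fst = μ → γ'.map Prod.snd = ν →
      ∫ p, ⟪p.1, p.2⟫ ∂γ' ≤ ∫ p, ⟪p.1, p.2⟫ ∂γ := by
  intro γ' hγ'1 hγ'2
  haveI hγprob : IsProbabilityMeasure γ := by
    constructor
    have h := congrArg (fun ρ : Measure (EuclideanSpace ℝ (Fin m)) => ρ univ) hγ1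
    simpa [Measure.map_apply measurable_fst MeasurableSet.univ] using h
  have hucont : Continuous u := by
    rw [← continuousOn_univ]
    exact hu.continuousOn isOpen_univ
  -- measurable full-measure subset K of S
  obtain ⟨A, hSA, hAmeas, hA0⟩ := exists_measurable_superset_of_null hconc
  set K := Aᶜ with hKdef
  have hKmeas : MeasurableSet K := hAmeas.compl
  have hKS : K ⊆ S := fun p hp => by
    by_contra h
    exact hp (hSA h)
  have hKc0 : γ Kᶜ = 0 := by simpa [hKdef] using hA0
  have hKae : ∀ᵐ p ∂γ, p ∈ K := by
    rw [ae_iff]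
    exact hKc0
  -- γ lives somewhere, so K is nonempty
  have hγuniv : γ univ = 1 := by
    have := congrArg (fun ρ : Measure (EuclideanSpace ℝ (Fin m)) => ρ univ) hγ1
    simpa [Measure.map_apply measurable_fst MeasurableSet.univ] using this
  have hKne : K.Nonempty := by
    rcases Set.eq_empty_or_nonempty K with h | h
    · exfalso
      have : γ univ = 0 := by
        have : (univ : Set (EuclideanSpace ℝ (Fin m) × EuclideanSpace ℝ (Fin m))) = Kᶜ := by
          rw [h]; simp
        rw [this]; exact hKc0
      rw [hγuniv] at this; exact one_ne_zero this
    · exact h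
  obtain ⟨p₀, hp₀⟩ := hKne
  -- dense sequence
  let d : ℕ → EuclideanSpace ℝ (Fin m) := TopologicalSpace.denseSeq _
  have hd : DenseRange d := TopologicalSpace.denseRange_denseSeq _
  -- Legendre transform as EReal-valued countable sup
  set V : EuclideanSpace ℝ (Fin m) → EReal :=
    fun y => ⨆ n, ((⟪d n, y⟫ - u (d n) : ℝ) : EReal) with hVdef
  have key1 : ∀ x y : EuclideanSpace ℝ (Fin m), ((⟪x, y⟫ - u x : ℝ) : EReal) ≤ V y := by
    intro x y
    refine le_of_forall_lt fun c hc => ?_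
    rw [hVdef, lt_iSup_iff]
    have hcont : Continuous fun z : EuclideanSpace ℝ (Fin m) =>
        ((⟪z, y⟫ - u z : ℝ) : EReal) :=
      continuous_coe_real_ereal.comp ((continuous_id.inner continuous_const).sub hucont)
    have hUo : IsOpen {z : EuclideanSpace ℝ (Fin m) | c < ((⟪z, y⟫ - u z : ℝ) : EReal)} :=
      isOpen_lt continuous_const hcont
    obtain ⟨n, hn⟩ := hd.exists_mem_open hUo ⟨x, hc⟩
    exact ⟨n, hn⟩
  have key2 : ∀ p ∈ S, V p.2 = ((⟪p.1, p.2⟫ - u p.1 : ℝ) : EReal) := by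
    intro p hp
    refine le_antisymm (iSup_le fun n => ?_) (key1 p.1 p.2)
    rw [EReal.coe_le_coe_iff]
    have h1 := hsub p hp (d n)
    have e2 : ⟪p.2, d n - p.1⟫ = ⟪p.2, d n⟫ - ⟪p.2, p.1⟫ := inner_sub_right _ _ _
    have e3 : ⟪p.2, d n⟫ = ⟪d n, p.2⟫ := real_inner_comm _ _
    have e4 : ⟪p.2, p.1⟫ = ⟪p.1, p.2⟫ := real_inner_comm _ _
    linarith
  have hVmeas : Measurable V := by
    refine Measurable.iSup fun n => Continuous.measurable ?_
    exact continuous_coe_real_ereal.comp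
      ((continuous_const.inner continuous_id).sub continuous_const)
  have hVbot : ∀ y, V y ≠ ⊥ := by
    intro y
    have h := le_iSup (fun n => ((⟪d n, y⟫ - u (d n) : ℝ) : EReal)) 0
    exact ((EReal.bot_lt_coe _).trans_le h).ne'
  set v : EuclideanSpace ℝ (Fin m) → ℝ := fun y => (V y).toReal with hvdef
  have hvmeas : Measurable v := hVmeas.ereal_toReal
  have hptwise : ∀ x y : EuclideanSpace ℝ (Fin m), V y ≠ ⊤ → ⟪x, y⟫ ≤ u x + v y := by
    intro x y hy
    have h1 := key1 x y
    have h2 : V y = ((v y : ℝ) : EReal) := (EReal.coe_toReal hy (hVbot y)).symm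
    rw [h2, EReal.coe_le_coe_iff] at h1
    linarith
  have hKeq : ∀ p ∈ K, u p.1 + v p.2 = ⟪p.1, p.2⟫ := by
    intro p hp
    have h := key2 p (hKS hp)
    have : v p.2 = ⟪p.1, p.2⟫ - u p.1 := by
      rw [hvdef]; simp only [h, EReal.toReal_coe]
    linarith
  have hmeasT : MeasurableSet {y | V y = ⊤} := hVmeas (measurableSet_singleton ⊤)
  have hVtop_null : ν {y | V y = ⊤} = 0 := by
    rw [← hγ2, Measure.map_apply measurable_snd hmeasT]
    refine measure_mono_null ?_ hKc0
    intro p hp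
    simp only [Set.mem_compl_iff]
    intro hpK
    have := key2 p (hKS hpK)
    rw [Set.mem_preimage, Set.mem_setOf_eq] at hp
    rw [hp] at this
    exact EReal.coe_ne_top _ this.symm
  -- integrability of the norm and norm² on the marginals
  have hμn2 : Integrable (fun x => ‖x‖ ^ 2) μ := by
    have h := hμ2.integrable_norm_rpow two_ne_zero ENNReal.ofNat_ne_top
    simp only [ENNReal.toReal_ofNat] at h
    refine h.congr (Filter.Eventually.of_forall fun x => ?_)
    show ‖x‖ ^ (2:ℝ) = ‖x‖ ^ 2
    rw [show ((2:ℝ)) = ((2:ℕ):ℝ) by norm_num, Real.rpow_natCast]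
  have hνn2 : Integrable (fun x => ‖x‖ ^ 2) ν := by
    have h := hν2.integrable_norm_rpow two_ne_zero ENNReal.ofNat_ne_top
    simp only [ENNReal.toReal_ofNat] at h
    refine h.congr (Filter.Eventually.of_forall fun x => ?_)
    show ‖x‖ ^ (2:ℝ) = ‖x‖ ^ 2
    rw [show ((2:ℝ)) = ((2:ℕ):ℝ) by norm_num, Real.rpow_natCast]
  have hμn1 : Integrable (fun x => ‖x‖) μ := (hμ2.integrable one_le_two).norm
  have hνn1 : Integrable (fun x => ‖x‖) ν := (hν2.integrable one_le_two).norm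
  -- integrability of the inner product for any coupling
  have hIP : ∀ ρ : Measure (EuclideanSpace ℝ (Fin m) × EuclideanSpace ℝ (Fin m)),
      ρ.map Prod.fst = μ → ρ.map Prod.snd = ν →
      Integrable (fun p : EuclideanSpace ℝ (Fin m) × EuclideanSpace ℝ (Fin m) =>
        ⟪p.1, p.2⟫) ρ := by
    intro ρ h1 h2
    have hf2 : Integrable (fun p : EuclideanSpace ℝ (Fin m) × EuclideanSpace ℝ (Fin m) =>
        ‖p.1‖ ^ 2) ρ := by
      have h : Integrable (fun x : EuclideanSpace ℝ (Fin m) => ‖x‖ ^ 2) (ρ.map Prod.fst) :=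
        h1.symm ▸ hμn2
      rwa [integrable_map_measure (g := fun x : EuclideanSpace ℝ (Fin m) => ‖x‖ ^ 2)
        ((continuous_norm.pow 2).aestronglyMeasurable)
        measurable_fst.aemeasurable] at h
    have hg2 : Integrable (fun p : EuclideanSpace ℝ (Fin m) × EuclideanSpace ℝ (Fin m) =>
        ‖p.2‖ ^ 2) ρ := by
      have h : Integrable (fun x : EuclideanSpace ℝ (Fin m) => ‖x‖ ^ 2) (ρ.map Prod.snd) :=
        h2.symm ▸ hνn2
      rwa [integrable_map_measure (g := fun x : EuclideanSpace ℝ (Fin m) => ‖x‖ ^ 2)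
        ((continuous_norm.pow 2).aestronglyMeasurable)
        measurable_snd.aemeasurable] at h
    refine Integrable.mono' ((hf2.add hg2).div_const 2)
      ((continuous_fst.inner continuous_snd).aestronglyMeasurable)
      (Filter.Eventually.of_forall fun p => ?_)
    rw [Real.norm_eq_abs]
    simp only [Pi.add_apply]
    have h := abs_real_inner_le_norm p.1 p.2
    nlinarith [sq_nonneg (‖p.1‖ - ‖p.2‖), norm_nonneg p.1, norm_nonneg p.2]
  have hIPγ := hIP γ hγ1 hγ2
  have hIPγ' := hIP γ' hγ'1 hγ'2
  -- affine functions are integrable w.r.t. γ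
  have hyγ : Integrable (fun p : EuclideanSpace ℝ (Fin m) × EuclideanSpace ℝ (Fin m) =>
      ⟪p₀.2, p.1⟫) γ := by
    have hyμ : Integrable (fun x : EuclideanSpace ℝ (Fin m) => ⟪p₀.2, x⟫) μ := by
      refine Integrable.mono' (hμn1.const_mul ‖p₀.2‖)
        ((continuous_const.inner continuous_id).aestronglyMeasurable)
        (Filter.Eventually.of_forall fun x => ?_)
      rw [Real.norm_eq_abs]
      exact abs_real_inner_le_norm _ _
    have h : Integrable (fun x : EuclideanSpace ℝ (Fin m) => ⟪p₀.2, x⟫) (γ.map Prod.fst) :=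
      hγ1.symm ▸ hyμ
    rwa [integrable_map_measure (g := fun x : EuclideanSpace ℝ (Fin m) => ⟪p₀.2, x⟫)
      ((continuous_const.inner continuous_id).aestronglyMeasurable)
      measurable_fst.aemeasurable] at h
  have hd0γ : Integrable (fun p : EuclideanSpace ℝ (Fin m) × EuclideanSpace ℝ (Fin m) =>
      ⟪d 0, p.2⟫) γ := by
    have hyν : Integrable (fun y : EuclideanSpace ℝ (Fin m) => ⟪d 0, y⟫) ν := by
      refine Integrable.mono' (hνn1.const_mul ‖d 0‖)
        ((continuous_const.inner continuous_id).aestronglyMeasurable)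
        (Filter.Eventually.of_forall fun x => ?_)
      rw [Real.norm_eq_abs]
      exact abs_real_inner_le_norm _ _
    have h : Integrable (fun y : EuclideanSpace ℝ (Fin m) => ⟪d 0, y⟫) (γ.map Prod.snd) :=
      hγ2.symm ▸ hyν
    rwa [integrable_map_measure (g := fun y : EuclideanSpace ℝ (Fin m) => ⟪d 0, y⟫)
      ((continuous_const.inner continuous_id).aestronglyMeasurable)
      measurable_snd.aemeasurable] at h
  -- integrability of u ∘ fst w.r.t. γ via sandwich
  have huγ : Integrable (fun p : EuclideanSpace ℝ (Fin m) × EuclideanSpace ℝ (Fin m) =>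
      u p.1) γ := by
    refine Integrable.mono'
      (g := fun p => |u p₀.1| + |⟪p₀.2, p.1⟫| + |⟪p₀.2, p₀.1⟫| + |⟪p.1, p.2⟫|
        + |⟪d 0, p.2⟫| + |u (d 0)|)
      ((((((integrable_const _).add hyγ.abs).add (integrable_const _)).add hIPγ.abs).add
        hd0γ.abs).add (integrable_const _))
      ((hucont.comp continuous_fst).aestronglyMeasurable) ?_
    filter_upwards [hKae] with p hp
    have hlow := hsub p₀ (hKS hp₀) p.1
    have hup := hsub p (hKS hp) (d 0)
    have e1 : ⟪p₀.2, p.1 - p₀.1⟫ = ⟪p₀.2, p.1⟫ - ⟪p₀.2, p₀.1⟫ := inner_sub_right _ _ _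
    have e2 : ⟪p.2, d 0 - p.1⟫ = ⟪p.2, d 0⟫ - ⟪p.2, p.1⟫ := inner_sub_right _ _ _
    have e3 : ⟪p.2, d 0⟫ = ⟪d 0, p.2⟫ := real_inner_comm _ _
    have e4 : ⟪p.2, p.1⟫ = ⟪p.1, p.2⟫ := real_inner_comm _ _
    rw [Real.norm_eq_abs, abs_le]
    constructor
    · have a1 := neg_abs_le (u p₀.1)
      have a2 := neg_abs_le ⟪p₀.2, p.1⟫
      have a3 := le_abs_self ⟪p₀.2, p₀.1⟫
      have a4 := abs_nonneg ⟪p.1, p.2⟫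
      have a5 := abs_nonneg ⟪d 0, p.2⟫
      have a6 := abs_nonneg (u (d 0))
      linarith
    · have a1 := abs_nonneg (u p₀.1)
      have a2 := abs_nonneg ⟪p₀.2, p.1⟫
      have a3 := abs_nonneg ⟪p₀.2, p₀.1⟫
      have a4 := le_abs_self ⟪p.1, p.2⟫
      have a5 := neg_abs_le ⟪d 0, p.2⟫
      have a6 := le_abs_self (u (d 0))
      linarith
  -- integrability of v ∘ snd w.r.t. γ
  have hvγ : Integrable (fun p : EuclideanSpace ℝ (Fin m) × EuclideanSpace ℝ (Fin m) =>
      v p.2) γ := by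
    refine (hIPγ.sub huγ).congr ?_
    filter_upwards [hKae] with p hp
    have := hKeq p hp
    simp only [Pi.sub_apply]
    linarith
  -- push integrability to the marginals
  have huμ : Integrable u μ := by
    rw [← hγ1, integrable_map_measure hucont.aestronglyMeasurable measurable_fst.aemeasurable]
    exact huγ
  have hvν : Integrable v ν := by
    rw [← hγ2,
      integrable_map_measure hvmeas.aestronglyMeasurable measurable_snd.aemeasurable]
    exact hvγ
  -- and back to γ'
  have huγ' : Integrable (fun p : EuclideanSpace ℝ (Fin m) × EuclideanSpace ℝ (Fin m) =>
      u p.1) γ' := by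
    have h : Integrable u (γ'.map Prod.fst) := hγ'1.symm ▸ huμ
    rwa [integrable_map_measure hucont.aestronglyMeasurable measurable_fst.aemeasurable] at h
  have hvγ' : Integrable (fun p : EuclideanSpace ℝ (Fin m) × EuclideanSpace ℝ (Fin m) =>
      v p.2) γ' := by
    have h : Integrable v (γ'.map Prod.snd) := hγ'2.symm ▸ hvν
    rwa [integrable_map_measure hvmeas.aestronglyMeasurable measurable_snd.aemeasurable] at h
  -- γ'-a.e. pointwise inequality
  have hae' : ∀ᵐ p ∂γ', ⟪p.1, p.2⟫ ≤ u p.1 + v p.2 := by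
    have h0 : γ' {p : EuclideanSpace ℝ (Fin m) × EuclideanSpace ℝ (Fin m) | V p.2 = ⊤} = 0 := by
      have heq : {p : EuclideanSpace ℝ (Fin m) × EuclideanSpace ℝ (Fin m) | V p.2 = ⊤}
          = Prod.snd ⁻¹' {y | V y = ⊤} := rfl
      rw [heq, ← Measure.map_apply measurable_snd hmeasT, hγ'2]
      exact hVtop_null
    have hne : ∀ᵐ p ∂γ', V p.2 ≠ ⊤ := by
      rw [ae_iff]
      simpa using h0
    filter_upwards [hne] with p hp
    exact hptwise p.1 p.2 hp
  -- transfer of integrals through marginals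
  have tru : ∀ ρ : Measure (EuclideanSpace ℝ (Fin m) × EuclideanSpace ℝ (Fin m)),
      ρ.map Prod.fst = μ → ∫ p, u p.1 ∂ρ = ∫ x, u x ∂μ := by
    intro ρ h
    rw [← h, integral_map measurable_fst.aemeasurable hucont.aestronglyMeasurable]
  have trv : ∀ ρ : Measure (EuclideanSpace ℝ (Fin m) × EuclideanSpace ℝ (Fin m)),
      ρ.map Prod.snd = ν → ∫ p, v p.2 ∂ρ = ∫ y, v y ∂ν := by
    intro ρ h
    rw [← h, integral_map measurable_snd.aemeasurable hvmeas.aestronglyMeasurable]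
  calc ∫ p, ⟪p.1, p.2⟫ ∂γ' ≤ ∫ p, (u p.1 + v p.2) ∂γ' :=
        integral_mono_ae hIPγ' (huγ'.add hvγ') hae'
    _ = ∫ p, u p.1 ∂γ' + ∫ p, v p.2 ∂γ' := integral_add huγ' hvγ'
    _ = ∫ p, u p.1 ∂γ + ∫ p, v p.2 ∂γ := by
        rw [tru γ' hγ'1, trv γ' hγ'2, tru γ hγ1, trv γ hγ2]
    _ = ∫ p, (u p.1 + v p.2) ∂γ := (integral_add huγ hvγ).symm
    _ = ∫ p, ⟪p.1, p.2⟫ ∂γ := by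
        refine integral_congr_ae ?_
        filter_upwards [hKae] with p hp
        exact hKeq p hp
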